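/- Let a, d ∈ ℝ, b > 0, T > 0, and let s : ℤ → ℂ be absolutely summable. Define its discrete-time LCT as Ŝ(ω) = (T/√(i·2πb))·Σ_{k∈ℤ} s(k)·exp(i·(a·(kT)² − 2·kT·ω + d·ω²)/(2b)). Then for every n ∈ ℤ, s(n) = (1/√(−i·2πb)) · ∫_{−πb/T}^{πb/T} Ŝ(ω)·exp(−i·(a·(nT)² − 2·nT·ω + d·ω²)/(2b)) dω. -/

import Mathlib

open MeasureTheory intervalIntegral

lemma expI_norm (r : ℝ) : ‖Complex.exp (Complex.I * r)‖ = 1 := by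
  rw [mul_comm, Complex.norm_exp_ofReal_mul_I]

lemma key_int (b T : ℝ) (hb : 0 < b) (hT : 0 < T) (m : ℤ) :
    (∫ ω in (-(Real.pi * b / T))..(Real.pi * b / T),
        Complex.exp ((Complex.I * (((m : ℝ) * T / b : ℝ) : ℂ)) * (ω : ℝ)))
      = if m = 0 then ((2 * Real.pi * b / T : ℝ) : ℂ) else 0 := by
  have hb' : (b : ℂ) ≠ 0 := Complex.ofReal_ne_zero.mpr hb.ne'
  have hT' : (T : ℂ) ≠ 0 := Complex.ofReal_ne_zero.mpr hT.ne'
  by_cases hm : m = 0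
  · subst hm
    have h0 : ∀ ω : ℝ,
        Complex.exp ((Complex.I * (((((0:ℤ) : ℝ) * T / b : ℝ)) : ℂ)) * (ω : ℝ)) = 1 := by
      intro ω; norm_num
    rw [if_pos rfl]
    simp only [h0]
    rw [intervalIntegral.integral_const, sub_neg_eq_add, Complex.real_smul, mul_one]
    push_cast
    ring
  · rw [if_neg hm]
    have hmc : ((m : ℝ) * T / b : ℝ) ≠ 0 :=
      div_ne_zero (mul_ne_zero (by exact_mod_cast hm) hT.ne') hb.ne'
    have hc : (Complex.I * (((m : ℝ) * T / b : ℝ) : ℂ)) ≠ 0 :=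
      mul_ne_zero Complex.I_ne_zero (Complex.ofReal_ne_zero.mpr hmc)
    rw [integral_exp_mul_complex hc]
    have h1 : (Complex.I * (((m : ℝ) * T / b : ℝ) : ℂ)) * ((Real.pi * b / T : ℝ) : ℂ)
        = (m : ℂ) * (Real.pi * Complex.I) := by
      push_cast
      field_simp
    have h2 : (Complex.I * (((m : ℝ) * T / b : ℝ) : ℂ)) * ((-(Real.pi * b / T) : ℝ) : ℂ)
        = ((-m : ℤ) : ℂ) * (Real.pi * Complex.I) := by
      push_cast
      field_simp
    rw [h1, h2, Complex.exp_int_mul, Complex.exp_int_mul, Complex.exp_pi_mul_I]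
    rw [zpow_neg, ← inv_zpow, inv_neg, inv_one, sub_self, zero_div]

/-- Discrete-time LCT of a sequence s : ℤ → ℂ with parameters a, d, b (b > 0)
and sampling period T; here √(i·2πb) = √(2πb)·e^{iπ/4}. -/
noncomputable def dtlct (a d b T : ℝ) (s : ℤ → ℂ) (ω : ℝ) : ℂ :=
  ((T : ℂ) / ((Real.sqrt (2 * Real.pi * b) : ℂ) * Complex.exp (Complex.I * Real.pi / 4))) *
    ∑' k : ℤ, s k *
      Complex.exp (Complex.I *
        (a * ((k : ℝ) * T) ^ 2 - 2 * ((k : ℝ) * T) * ω + d * ω ^ 2) / (2 * b))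

noncomputable def Fker (a d b T : ℝ) (s : ℤ → ℂ) (n k : ℤ) (ω : ℝ) : ℂ :=
  s k *
    Complex.exp (Complex.I *
      (a * ((k : ℝ) * T) ^ 2 - 2 * ((k : ℝ) * T) * ω + d * ω ^ 2) / (2 * b)) *
    Complex.exp (-Complex.I *
      (a * ((n : ℝ) * T) ^ 2 - 2 * ((n : ℝ) * T) * ω + d * ω ^ 2) / (2 * b))

lemma Fker_eq (a d b T : ℝ) (hb : 0 < b) (s : ℤ → ℂ) (n k : ℤ) (ω : ℝ) :
    Fker a d b T s n k ω =
      (s k * Complex.exp (Complex.I *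
          ((a * T ^ 2 * ((k : ℝ) ^ 2 - (n : ℝ) ^ 2) / (2 * b) : ℝ) : ℂ))) *
        Complex.exp ((Complex.I * ((((n - k : ℤ) : ℝ) * T / b : ℝ) : ℂ)) * (ω : ℝ)) := by
  have hb' : (b : ℂ) ≠ 0 := Complex.ofReal_ne_zero.mpr hb.ne'
  have hcomb : ∀ x y : ℂ, s k * Complex.exp x * Complex.exp y = s k * Complex.exp (x + y) := by
    intro x y; rw [mul_assoc, ← Complex.exp_add]
  rw [Fker, hcomb, show Complex.I * ((((n - k : ℤ) : ℝ) * T / b : ℝ) : ℂ) * (ω : ℝ)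
      = Complex.I * (((((n - k : ℤ) : ℝ) * T / b) * ω : ℝ) : ℂ) by push_cast; ring, hcomb]
  congr 2
  push_cast
  field_simp
  ring

lemma Fker_norm (a d b T : ℝ) (hb : 0 < b) (s : ℤ → ℂ) (n k : ℤ) (ω : ℝ) :
    ‖Fker a d b T s n k ω‖ = ‖s k‖ := by
  rw [Fker_eq a d b T hb s n k ω, mul_assoc Complex.I, ← Complex.ofReal_mul, norm_mul, norm_mul,
    expI_norm, expI_norm, mul_one, mul_one]

/-- Inversion formula for the discrete-time LCT: a summable sequence is recovered
from its DT-LCT by integrating against the inverse kernel over the fundamental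
band [−πb/T, πb/T]. Here √(−i·2πb) = √(2πb)·e^{−iπ/4}. -/
theorem stmt7 (a d b T : ℝ) (hb : 0 < b) (hT : 0 < T)
    (s : ℤ → ℂ) (hs : Summable fun n => ‖s n‖) :
    ∀ n : ℤ, s n =
      (1 / ((Real.sqrt (2 * Real.pi * b) : ℂ) * Complex.exp (-Complex.I * Real.pi / 4))) *
        ∫ ω in (-(Real.pi * b / T))..(Real.pi * b / T),
          dtlct a d b T s ω *
            Complex.exp (-Complex.I *
              (a * ((n : ℝ) * T) ^ 2 - 2 * ((n : ℝ) * T) * ω + d * ω ^ 2) / (2 * b)) := by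
  intro n
  have hb' : (b : ℂ) ≠ 0 := Complex.ofReal_ne_zero.mpr hb.ne'
  have hT' : (T : ℂ) ≠ 0 := Complex.ofReal_ne_zero.mpr hT.ne'
  have h2πb : (0 : ℝ) < 2 * Real.pi * b := by positivity
  -- pointwise identity
  have hpt : ∀ ω : ℝ,
      dtlct a d b T s ω *
        Complex.exp (-Complex.I *
          (a * ((n : ℝ) * T) ^ 2 - 2 * ((n : ℝ) * T) * ω + d * ω ^ 2) / (2 * b))
      = ((T : ℂ) / ((Real.sqrt (2 * Real.pi * b) : ℂ) *
          Complex.exp (Complex.I * Real.pi / 4))) * ∑' k : ℤ, Fker a d b T s n k ω := by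
    intro ω
    rw [dtlct, mul_assoc, ← tsum_mul_right]
    rfl
  have hFsummable : ∀ ω : ℝ, Summable fun k => Fker a d b T s n k ω := by
    intro ω
    apply Summable.of_norm
    simpa only [Fker_norm a d b T hb s n] using hs
  have hswap : HasSum (fun k : ℤ =>
      ∫ ω in (-(Real.pi * b / T))..(Real.pi * b / T), Fker a d b T s n k ω)
      (∫ ω in (-(Real.pi * b / T))..(Real.pi * b / T), ∑' k : ℤ, Fker a d b T s n k ω) := by
    apply intervalIntegral.hasSum_integral_of_dominated_convergence (fun k _ => ‖s k‖)
    · intro k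
      apply Continuous.aestronglyMeasurable
      unfold Fker
      fun_prop
    · intro k
      filter_upwards with ω _
      rw [Fker_norm a d b T hb s n]
    · filter_upwards with ω _
      exact hs
    · exact intervalIntegrable_const
    · filter_upwards with ω _
      exact (hFsummable ω).hasSum
  have hint : ∀ k : ℤ,
      (∫ ω in (-(Real.pi * b / T))..(Real.pi * b / T), Fker a d b T s n k ω)
      = if k = n then s n * ((2 * Real.pi * b / T : ℝ) : ℂ) else 0 := by
    intro k
    have hrw : (∫ ω in (-(Real.pi * b / T))..(Real.pi * b / T), Fker a d b T s n k ω)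
        = (s k * Complex.exp (Complex.I *
            ((a * T ^ 2 * ((k : ℝ) ^ 2 - (n : ℝ) ^ 2) / (2 * b) : ℝ) : ℂ))) *
          ∫ ω in (-(Real.pi * b / T))..(Real.pi * b / T),
            Complex.exp ((Complex.I * ((((n - k : ℤ) : ℝ) * T / b : ℝ) : ℂ)) * (ω : ℝ)) := by
      rw [← intervalIntegral.integral_const_mul]
      apply intervalIntegral.integral_congr
      intro ω _
      rw [Fker_eq a d b T hb s n k ω]
    rw [hrw, key_int b T hb hT (n - k)]
    by_cases hk : k = n
    · subst hk
      rw [if_pos (by omega), if_pos rfl]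
      norm_num
    · rw [if_neg (by omega), if_neg hk, mul_zero]
  have htsum : (∑' k : ℤ, ∫ ω in (-(Real.pi * b / T))..(Real.pi * b / T), Fker a d b T s n k ω)
      = s n * ((2 * Real.pi * b / T : ℝ) : ℂ) := by
    rw [tsum_eq_single n]
    · rw [hint, if_pos rfl]
    · intro k hk
      rw [hint, if_neg hk]
  have hval : (∫ ω in (-(Real.pi * b / T))..(Real.pi * b / T),
      ∑' k : ℤ, Fker a d b T s n k ω) = s n * ((2 * Real.pi * b / T : ℝ) : ℂ) := by
    rw [← hswap.tsum_eq, htsum]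
  have hintegral : (∫ ω in (-(Real.pi * b / T))..(Real.pi * b / T),
      dtlct a d b T s ω *
        Complex.exp (-Complex.I *
          (a * ((n : ℝ) * T) ^ 2 - 2 * ((n : ℝ) * T) * ω + d * ω ^ 2) / (2 * b)))
      = ((T : ℂ) / ((Real.sqrt (2 * Real.pi * b) : ℂ) * Complex.exp (Complex.I * Real.pi / 4))) *
        (s n * ((2 * Real.pi * b / T : ℝ) : ℂ)) := by
    rw [intervalIntegral.integral_congr (fun ω _ => hpt ω),
      intervalIntegral.integral_const_mul, hval]
  rw [hintegral]
  have hsq : ((Real.sqrt (2 * Real.pi * b) : ℂ)) * ((Real.sqrt (2 * Real.pi * b) : ℂ))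
      = ((2 * Real.pi * b : ℝ) : ℂ) := by
    rw [← Complex.ofReal_mul, Real.mul_self_sqrt h2πb.le]
  have hexp : Complex.exp (-Complex.I * Real.pi / 4) * Complex.exp (Complex.I * Real.pi / 4)
      = 1 := by
    rw [← Complex.exp_add]
    ring_nf
    exact Complex.exp_zero
  have hsqrt_ne : ((Real.sqrt (2 * Real.pi * b) : ℂ)) ≠ 0 := by
    rw [Complex.ofReal_ne_zero]
    positivity
  have he1 : Complex.exp (-Complex.I * Real.pi / 4) ≠ 0 := Complex.exp_ne_zero _
  have he2 : Complex.exp (Complex.I * Real.pi / 4) ≠ 0 := Complex.exp_ne_zero _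
  have hX : ((2 * Real.pi * b / T : ℝ) : ℂ)
      = ((Real.sqrt (2 * Real.pi * b) : ℂ) * (Real.sqrt (2 * Real.pi * b) : ℂ)) / (T : ℂ) := by
    rw [hsq]
    push_cast
    ring
  rw [hX]
  set R : ℂ := ((Real.sqrt (2 * Real.pi * b) : ℝ) : ℂ) with hRdef
  field_simp
  ring_nf
  ring_nf at hexp
  linear_combination (s n) * hexp
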